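/- For every integer j ≤ 1, the asymptotic density of the set {n ∈ ℕ : s(n+1) - s(n) = j} equals 2^{j-2}, and for j > 1 this density is 0. -/

import Mathlib

open Filter
lemma s_odd (m : ℕ) : (Nat.digits 2 (2*m+1)).sum = (Nat.digits 2 m).sum + 1 := by
  rw [Nat.digits_def' (by norm_num : 1 < 2) (by omega)]
  have h1 : (2*m+1) % 2 = 1 := by omega
  have h2 : (2*m+1) / 2 = m := by omega
  rw [h1, h2]; simp [Nat.add_comm]

lemma s_even (m : ℕ) : (Nat.digits 2 (2*m)).sum = (Nat.digits 2 m).sum := by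
  rcases Nat.eq_zero_or_pos m with h | h
  · simp [h]
  · rw [Nat.digits_def' (by norm_num : 1 < 2) (by omega)]
    have h1 : (2*m) % 2 = 0 := by omega
    have h2 : (2*m) / 2 = m := by omega
    rw [h1, h2]; simp

lemma key (n : ℕ) : ((Nat.digits 2 (n + 1)).sum : ℤ) - ((Nat.digits 2 n).sum : ℤ)
      = 1 - (padicValNat 2 (n + 1) : ℤ) := by
  induction n using Nat.strong_induction_on with
  | _ n ih =>
    rcases Nat.even_or_odd n with ⟨m, hm⟩ | ⟨m, hm⟩
    · have hm' : n = 2*m := by omega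
      subst hm'
      have hv : padicValNat 2 (2*m+1) = 0 :=
        padicValNat.eq_zero_of_not_dvd (by omega)
      rw [s_odd, s_even, hv]; push_cast; ring
    · have hm' : n = 2*m+1 := by omega
      subst hm'
      have h2 : 2*m+1+1 = 2*(m+1) := by ring
      have hv : padicValNat 2 (2*(m+1)) = padicValNat 2 (m+1) + 1 := by
        rw [padicValNat.mul (by norm_num) (by omega), padicValNat.self (by norm_num)]
        omega
      rw [h2, s_even, s_odd, hv]
      have := ih m (by omega)
      push_cast at this ⊢
      linarith
lemma val_eq_iff (v n : ℕ) : padicValNat 2 (n+1) = v ↔ n % 2^(v+1) = 2^v - 1 := by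
  have h2 : (2:ℕ)^v ≤ 2^(v+1) := Nat.pow_le_pow_right (by norm_num) (by omega)
  have hpos : 0 < (2:ℕ)^v := Nat.pow_pos (by norm_num)
  have hlt : (2:ℕ)^v < 2^(v+1) := by
    have : (2:ℕ)^(v+1) = 2^v * 2 := by ring
    omega
  have hdvd : padicValNat 2 (n+1) = v ↔ 2^v ∣ n+1 ∧ ¬ 2^(v+1) ∣ n+1 := by
    constructor
    · rintro rfl
      exact ⟨pow_padicValNat_dvd, pow_succ_padicValNat_not_dvd (by omega)⟩
    · rintro ⟨h1, h3⟩
      have a1 : v ≤ padicValNat 2 (n+1) :=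
        (padicValNat_dvd_iff_le (by omega)).mp h1
      have a2 : ¬ (v+1 ≤ padicValNat 2 (n+1)) := fun h =>
        h3 ((padicValNat_dvd_iff_le (by omega)).mpr h)
      omega
  rw [hdvd]
  have hmod : (n+1) % 2^(v+1) = 2^v ↔ n % 2^(v+1) = 2^v - 1 := by
    constructor
    · intro h
      have := Nat.div_add_mod (n+1) (2^(v+1))
      have hn : n = 2^(v+1) * ((n+1)/2^(v+1)) + (2^v - 1) := by omega
      rw [hn, Nat.mul_add_mod]
      exact Nat.mod_eq_of_lt (by omega)
    · intro h
      have := Nat.div_add_mod n (2^(v+1))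
      have hn : n + 1 = 2^(v+1) * (n/2^(v+1)) + 2^v := by omega
      rw [hn, Nat.mul_add_mod]
      exact Nat.mod_eq_of_lt hlt
  rw [← hmod]
  constructor
  · rintro ⟨h1, h3⟩
    have hd : 2^v ∣ (n+1) % 2^(v+1) := (Nat.dvd_mod_iff (pow_dvd_pow 2 (by omega))).mpr h1
    have hne : (n+1) % 2^(v+1) ≠ 0 := fun h => h3 (Nat.dvd_of_mod_eq_zero h)
    have hlt2 : (n+1) % 2^(v+1) < 2^(v+1) := Nat.mod_lt _ (by omega)
    obtain ⟨k, hk⟩ := hd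
    have hk2 : (2:ℕ)^(v+1) = 2^v * 2 := by ring
    have hklt : 2^v * k < 2^v * 2 := by omega
    have hk1 : k = 1 := by
      have := Nat.lt_of_mul_lt_mul_left hklt
      rcases k with _ | _ | k
      · simp at hk; omega
      · rfl
      · omega
    rw [hk1, mul_one] at hk
    omega
  · intro h
    constructor
    · have : (2:ℕ)^v ∣ (n+1) % 2^(v+1) := by rw [h]
      exact (Nat.dvd_mod_iff (pow_dvd_pow 2 (Nat.le_succ v))).mp this
    · intro hd
      have h0 : (n+1) % 2^(v+1) = 0 := Nat.mod_eq_zero_of_dvd hd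
      omega
lemma count_tendsto (M r : ℕ) (hM : 0 < M) (hr : r < M) :
    Tendsto (fun N : ℕ => ((Finset.filter (fun n => n % M = r) (Finset.range N)).card : ℝ) / N)
      atTop (nhds (1 / M)) := by
  have hcard : ∀ N, (Finset.filter (fun n => n % M = r) (Finset.range N)).card
      = N / M + if r < N % M then 1 else 0 := by
    intro N
    have h := Nat.count_modEq_card (b := N) (r := M) hM r
    rw [Nat.count_eq_card_filter_range, Nat.mod_eq_of_lt hr] at h
    rw [← h]
    congr 1
    apply Finset.filter_congr
    intro n _
    simp [Nat.ModEq, Nat.mod_eq_of_lt hr]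
  rw [← tendsto_sub_nhds_zero_iff]
  apply squeeze_zero_norm' (a := fun N : ℕ => 1 / (N : ℝ))
  · filter_upwards [eventually_ge_atTop 1] with N hN
    have hN0 : (0:ℝ) < N := by exact_mod_cast hN
    have hM0 : (0:ℝ) < M := by exact_mod_cast hM
    rw [hcard N, Real.norm_eq_abs]
    set e : ℕ := if r < N % M then 1 else 0 with he
    have he1 : e ≤ 1 := by rw [he]; split <;> omega
    have hdm := Nat.div_add_mod N M
    have hmlt : N % M < M := Nat.mod_lt _ hM
    have hq : ((N / M : ℕ) : ℝ) * M + ((N % M : ℕ) : ℝ) = N := by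
      have hdm2 : (N/M)*M + N%M = N := by rw [mul_comm] at hdm; exact hdm
      exact_mod_cast congrArg (Nat.cast : ℕ → ℝ) hdm2
    have hm0 : (0:ℝ) ≤ ((N % M : ℕ):ℝ) := Nat.cast_nonneg _
    have hmlt' : ((N % M : ℕ):ℝ) < M := by exact_mod_cast Nat.mod_lt _ hM
    have he1' : ((e:ℕ):ℝ) ≤ 1 := by exact_mod_cast he1
    have he0 : (0:ℝ) ≤ (e:ℝ) := Nat.cast_nonneg _
    rw [div_sub_div _ _ hN0.ne' hM0.ne', abs_div, abs_of_pos (by positivity : (0:ℝ) < N * M)]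
    rw [div_le_div_iff₀ (by positivity) hN0]
    have habs : |((N / M + e : ℕ) : ℝ) * M - N * 1| ≤ M := by
      rw [abs_le]
      push_cast
      constructor <;>
        nlinarith [hq, hm0, hmlt', he1', he0, mul_nonneg he0 hM0.le,
          mul_le_mul_of_nonneg_right he1' hM0.le]
    calc |((N / M + e : ℕ) : ℝ) * M - N * 1| * N ≤ M * N := by
            exact mul_le_mul_of_nonneg_right habs hN0.le
      _ = 1 * ((N:ℝ) * M) := by ring
  · exact tendsto_one_div_atTop_nhds_zero_nat

/-- For every integer `j ≤ 1`, the asymptotic density of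
`{n : s(n+1) - s(n) = j}` equals `2^(j-2)`, and for `j > 1` it is `0`. -/
theorem cusick_stmt2 (j : ℤ) :
    Tendsto
      (fun N : ℕ =>
        (((Finset.range N).filter
            (fun n => ((Nat.digits 2 (n + 1)).sum : ℤ) - ((Nat.digits 2 n).sum : ℤ) = j)).card : ℝ)
          / N)
      atTop (nhds (if j ≤ 1 then (2 : ℝ) ^ (j - 2) else 0)) := by
  by_cases hj : j ≤ 1
  · rw [if_pos hj]
    set v : ℕ := (1 - j).toNat with hv
    have hjv : j = 1 - (v : ℤ) := by omega
    have hp1 : 0 < (2:ℕ)^v := Nat.pow_pos (by norm_num)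
    have hp2 : (2:ℕ)^v < 2^(v+1) := by
      have : (2:ℕ)^(v+1) = 2^v * 2 := by ring
      omega
    have hfun : (fun N : ℕ =>
        (((Finset.range N).filter
            (fun n => ((Nat.digits 2 (n + 1)).sum : ℤ) - ((Nat.digits 2 n).sum : ℤ) = j)).card : ℝ)
          / N)
        = fun N : ℕ =>
          ((Finset.filter (fun n => n % 2^(v+1) = 2^v - 1) (Finset.range N)).card : ℝ) / N := by
      funext N
      congr 2
      apply congrArg
      apply Finset.filter_congr
      intro n _
      rw [key n, ← val_eq_iff v n]
      constructor <;> intro h <;> omega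
    have hval : (2:ℝ)^(j-2) = 1 / ((2^(v+1) : ℕ) : ℝ) := by
      have h1 : j - 2 = -(((v+1 : ℕ) : ℤ)) := by push_cast; omega
      rw [h1, zpow_neg, zpow_natCast, one_div]
      norm_cast
    rw [hfun, hval]
    exact count_tendsto (2^(v+1)) (2^v - 1) (by positivity) (by omega)
  · rw [if_neg hj]
    have hfun : (fun N : ℕ =>
        (((Finset.range N).filter
            (fun n => ((Nat.digits 2 (n + 1)).sum : ℤ) - ((Nat.digits 2 n).sum : ℤ) = j)).card : ℝ)
          / N) = fun _ : ℕ => (0:ℝ) := by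
      funext N
      rw [Finset.filter_false_of_mem, Finset.card_empty]
      · simp
      · intro n _
        rw [key n]
        have := Int.natCast_nonneg (padicValNat 2 (n+1))
        omega
    rw [hfun]
    exact tendsto_const_nhds
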